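/- Let n ≥ 0 and s ≥ 1 be integers, and let F_1, …, F_s ⊆ 2^[n] be cross-dependent families. Then ‖F_1‖_n + ‖F_2‖_n + … + ‖F_s‖_n ≤ (n+1)(s−1); equivalently, ρ_n(F_1) + … + ρ_n(F_s) ≤ s−1. -/

import Mathlib

open Finset

/-- The binomial norm of a family `F` of subsets of `[n]`:
`‖F‖ₙ = ∑_{A ∈ F} 1 / C(n, |A|)`. -/
noncomputable def binNorm (n : ℕ) (F : Finset (Finset ℕ)) : ℝ :=
  ∑ A ∈ F, 1 / (n.choose A.card : ℝ)

/-- Families `F 1, …, F s` are cross-dependent if one cannot pick `f i ∈ F i`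
with the `f i` pairwise disjoint. -/
def CrossDep {s : ℕ} (F : Fin s → Finset (Finset ℕ)) : Prop :=
  ¬ ∃ f : Fin s → Finset ℕ, (∀ i, f i ∈ F i) ∧
      Pairwise fun i j => Disjoint (f i) (f j)

namespace CrossDepProof

/-- The deletion family: members of `F` avoiding `x`. -/
def delF (F : Finset (Finset ℕ)) (x : ℕ) : Finset (Finset ℕ) :=
  F.filter fun A => x ∉ A

/-- The link family: members of `F` containing `x`, with `x` removed. -/
def lnkF (F : Finset (Finset ℕ)) (x : ℕ) : Finset (Finset ℕ) :=
  (F.filter fun A => x ∈ A).image fun A => A.erase x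

lemma binNorm_le {n : ℕ} {X : Finset ℕ} (hX : X.card = n) {F : Finset (Finset ℕ)}
    (hF : ∀ A ∈ F, A ⊆ X) : binNorm n F ≤ (n : ℝ) + 1 := by
  have h1 : binNorm n F ≤ binNorm n X.powerset := by
    apply Finset.sum_le_sum_of_subset_of_nonneg
    · intro A hA; exact mem_powerset.mpr (hF A hA)
    · intro A _ _; positivity
  refine h1.trans ?_
  unfold binNorm
  rw [Finset.sum_powerset]
  calc ∑ j ∈ range (X.card + 1), ∑ A ∈ powersetCard j X, 1 / ((n.choose A.card : ℝ))
      ≤ ∑ _j ∈ range (X.card + 1), (1:ℝ) := by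
        apply Finset.sum_le_sum
        intro j _
        have h2 : ∑ A ∈ powersetCard j X, 1 / ((n.choose A.card : ℝ))
            = ∑ _A ∈ powersetCard j X, 1 / ((n.choose j : ℝ)) := by
          apply Finset.sum_congr rfl
          intro A hA
          rw [(Finset.mem_powersetCard.mp hA).2]
        rw [h2, Finset.sum_const, Finset.card_powersetCard, hX, nsmul_eq_mul]
        rcases Nat.eq_zero_or_pos (n.choose j) with h | h
        · simp [h]
        · rw [mul_one_div, div_le_one (by exact_mod_cast h)]
    _ = (n:ℝ) + 1 := by
        rw [Finset.sum_const, card_range, nsmul_eq_mul, mul_one, hX]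
        push_cast
        ring

lemma sum_binNorm_delF {n : ℕ} (hn : 1 ≤ n) {X : Finset ℕ} (hX : X.card = n)
    {F : Finset (Finset ℕ)} (hF : ∀ A ∈ F, A ⊆ X) :
    ∑ x ∈ X, binNorm (n - 1) (delF F x)
      = n * binNorm n F - n * (if X ∈ F then (1:ℝ) else 0) := by
  have key : ∀ A ∈ F,
      ∑ x ∈ X, (if x ∉ A then (1:ℝ) / ((n-1).choose A.card : ℝ) else 0)
        = (n:ℝ) * (1 / (n.choose A.card : ℝ)) - n * (if A = X then (1:ℝ) else 0) := by
    intro A hA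
    have hAX := hF A hA
    have hm : A.card ≤ n := hX ▸ card_le_card hAX
    rw [← Finset.sum_filter, ← Finset.sdiff_eq_filter, Finset.sum_const,
      Finset.card_sdiff_of_subset hAX, hX, nsmul_eq_mul]
    rcases eq_or_lt_of_le hm with he | hlt
    · have hAXeq : A = X := Finset.eq_of_subset_of_card_le hAX (by omega)
      subst hAXeq
      rw [if_pos rfl, he, Nat.sub_self, Nat.choose_self]
      norm_num
    · have hne : A ≠ X := by
        intro h; subst h; omega
      rw [if_neg hne, mul_zero, sub_zero]
      have h1 : 0 < (n-1).choose A.card := Nat.choose_pos (by omega)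
      have h2 : 0 < n.choose A.card := Nat.choose_pos hm
      have hid : (n - 1).choose A.card * n = n.choose A.card * (n - A.card) := by
        have h3 := Nat.choose_mul_succ_eq (n-1) A.card
        rw [Nat.sub_add_cancel hn] at h3
        exact h3
      have hcast : ((n-1).choose A.card : ℝ) * n = (n.choose A.card : ℝ) * ((n:ℝ) - A.card) := by
        have := congrArg (fun t : ℕ => (t : ℝ)) hid
        push_cast [Nat.cast_sub hm] at this
        linarith [this]
      have c1 : ((n - A.card : ℕ) : ℝ) = (n:ℝ) - A.card := by
        push_cast [Nat.cast_sub hm]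
        ring
      rw [mul_one_div, mul_one_div, c1,
        div_eq_div_iff (by exact_mod_cast h1.ne') (by exact_mod_cast h2.ne')]
      linarith [hcast]
  unfold binNorm delF
  calc ∑ x ∈ X, ∑ A ∈ F.filter (fun A => x ∉ A), (1:ℝ) / ((n-1).choose A.card : ℝ)
      = ∑ x ∈ X, ∑ A ∈ F, (if x ∉ A then (1:ℝ) / ((n-1).choose A.card : ℝ) else 0) := by
        refine Finset.sum_congr rfl fun x _ => ?_
        rw [Finset.sum_filter]
    _ = ∑ A ∈ F, ∑ x ∈ X, (if x ∉ A then (1:ℝ) / ((n-1).choose A.card : ℝ) else 0) :=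
        Finset.sum_comm
    _ = ∑ A ∈ F, ((n:ℝ) * (1 / (n.choose A.card : ℝ)) - n * (if A = X then (1:ℝ) else 0)) :=
        Finset.sum_congr rfl key
    _ = (n:ℝ) * (∑ A ∈ F, 1 / (n.choose A.card : ℝ)) - n * (if X ∈ F then (1:ℝ) else 0) := by
        rw [Finset.sum_sub_distrib, ← Finset.mul_sum, ← Finset.mul_sum,
          Finset.sum_ite_eq' F X (fun _ => (1:ℝ))]

lemma sum_binNorm_lnkF {n : ℕ} (hn : 1 ≤ n) {X : Finset ℕ} (hX : X.card = n)
    {F : Finset (Finset ℕ)} (hF : ∀ A ∈ F, A ⊆ X) (hne : ∅ ∉ F) :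
    ∑ x ∈ X, binNorm (n - 1) (lnkF F x) = n * binNorm n F := by
  have step1 : ∀ x : ℕ, binNorm (n-1) (lnkF F x)
      = ∑ A ∈ F, (if x ∈ A then (1:ℝ) / ((n-1).choose (A.card - 1) : ℝ) else 0) := by
    intro x
    unfold binNorm lnkF
    rw [Finset.sum_image (by
      intro A hA B hB h
      have hxA : x ∈ A := (Finset.mem_filter.mp hA).2
      have hxB : x ∈ B := (Finset.mem_filter.mp hB).2
      rw [← Finset.insert_erase hxA, ← Finset.insert_erase hxB]; exact congrArg (insert x) h)]
    calc ∑ A ∈ F.filter (fun A => x ∈ A), (1:ℝ) / ((n-1).choose ((A.erase x).card) : ℝ)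
        = ∑ A ∈ F.filter (fun A => x ∈ A), (1:ℝ) / ((n-1).choose (A.card - 1) : ℝ) := by
          refine Finset.sum_congr rfl fun A hA => ?_
          rw [Finset.card_erase_of_mem (Finset.mem_filter.mp hA).2]
      _ = _ := Finset.sum_filter _ _
  have key : ∀ A ∈ F,
      ∑ x ∈ X, (if x ∈ A then (1:ℝ) / ((n-1).choose (A.card - 1) : ℝ) else 0)
        = (n:ℝ) * (1 / (n.choose A.card : ℝ)) := by
    intro A hA
    have hAX := hF A hA
    have hm : A.card ≤ n := hX ▸ card_le_card hAX
    have hm1 : 1 ≤ A.card := Finset.card_pos.mpr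
      (Finset.nonempty_iff_ne_empty.mpr (by rintro rfl; exact hne hA))
    rw [← Finset.sum_filter, Finset.filter_mem_eq_inter, Finset.inter_eq_right.mpr hAX,
      Finset.sum_const, nsmul_eq_mul]
    have h1 : 0 < (n-1).choose (A.card - 1) := Nat.choose_pos (by omega)
    have h2 : 0 < n.choose A.card := Nat.choose_pos hm
    have hid : n * (n-1).choose (A.card - 1) = n.choose A.card * A.card := by
      have h3 := Nat.add_one_mul_choose_eq (n-1) (A.card - 1)
      rw [Nat.sub_add_cancel hn, Nat.sub_add_cancel hm1] at h3
      exact h3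
    have hcast : (n:ℝ) * ((n-1).choose (A.card - 1) : ℝ) = (n.choose A.card : ℝ) * A.card := by
      exact_mod_cast hid
    rw [mul_one_div, mul_one_div,
      div_eq_div_iff (by exact_mod_cast h1.ne') (by exact_mod_cast h2.ne')]
    linarith [hcast]
  calc ∑ x ∈ X, binNorm (n-1) (lnkF F x)
      = ∑ x ∈ X, ∑ A ∈ F, (if x ∈ A then (1:ℝ) / ((n-1).choose (A.card - 1) : ℝ) else 0) :=
        Finset.sum_congr rfl fun x _ => step1 x
    _ = ∑ A ∈ F, ∑ x ∈ X, (if x ∈ A then (1:ℝ) / ((n-1).choose (A.card - 1) : ℝ) else 0) :=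
        Finset.sum_comm
    _ = ∑ A ∈ F, (n:ℝ) * (1 / (n.choose A.card : ℝ)) := Finset.sum_congr rfl key
    _ = n * binNorm n F := by rw [← Finset.mul_sum]; rfl

lemma main_aux (N : ℕ) : ∀ (n s : ℕ) (X : Finset ℕ) (F : Fin s → Finset (Finset ℕ)),
    n + s ≤ N → 1 ≤ s → X.card = n → (∀ i, ∀ A ∈ F i, A ⊆ X) → CrossDep F →
    ∑ i, binNorm n (F i) ≤ ((n : ℝ) + 1) * ((s : ℝ) - 1) := by
  induction N with
  | zero => intro n s X F h hs _ _ _; omega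
  | succ N ih =>
    intro n s X F hle hs hX hsub hcross
    obtain ⟨s', rfl⟩ : ∃ s', s = s' + 1 := ⟨s - 1, by omega⟩
    by_cases hs1 : s' = 0
    · subst hs1
      have hF0 : F 0 = ∅ := by
        by_contra h
        obtain ⟨A, hA⟩ := Finset.nonempty_iff_ne_empty.mpr h
        exact hcross ⟨fun _ => A, fun i => by
          have hi : i = 0 := Fin.ext (by omega)
          rw [hi]; exact hA, fun a b hab => absurd (Fin.ext (by omega)) hab⟩
      rw [Fin.sum_univ_one, hF0]
      norm_num [binNorm]
    · have hs' : 1 ≤ s' := by omega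
      by_cases hemp : ∃ j, ∅ ∈ F j
      · obtain ⟨j, hj⟩ := hemp
        have hcG : CrossDep (fun i => F (j.succAbove i)) := by
          rintro ⟨f, hf, hpw⟩
          refine hcross ⟨j.insertNth ∅ f, ?_, ?_⟩
          · intro k
            by_cases hk : k = j
            · subst hk; rw [Fin.insertNth_apply_same]; exact hj
            · obtain ⟨a, rfl⟩ := Fin.exists_succAbove_eq hk
              rw [Fin.insertNth_apply_succAbove]; exact hf a
          · intro k l hkl
            by_cases hk : k = j
            · subst hk; rw [Fin.insertNth_apply_same]; exact Finset.disjoint_empty_left _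
            · obtain ⟨a, rfl⟩ := Fin.exists_succAbove_eq hk
              by_cases hl : l = j
              · subst hl; rw [Fin.insertNth_apply_same]; exact Finset.disjoint_empty_right _
              · obtain ⟨b, rfl⟩ := Fin.exists_succAbove_eq hl
                rw [Fin.insertNth_apply_succAbove, Fin.insertNth_apply_succAbove]
                exact hpw fun h => hkl (by rw [h])
        have hIH := ih n s' X (fun i => F (j.succAbove i)) (by omega) hs' hX
          (fun i => hsub _) hcG
        have hFj : binNorm n (F j) ≤ (n:ℝ) + 1 := binNorm_le hX (hsub j)
        rw [Fin.sum_univ_succAbove (fun i => binNorm n (F i)) j]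
        push_cast
        push_cast at hIH
        nlinarith [hIH, hFj]
      · push_neg at hemp
        by_cases hn0 : n = 0
        · subst hn0
          have hXe : X = ∅ := Finset.card_eq_zero.mp hX
          have hFe : ∀ i, F i = ∅ := by
            intro i
            rw [Finset.eq_empty_iff_forall_notMem]
            intro A hA
            have hA0 : A = ∅ := Finset.subset_empty.mp (hXe ▸ hsub i A hA)
            exact hemp i (hA0 ▸ hA)
          simp only [hFe, binNorm, Finset.sum_empty, Finset.sum_const, smul_zero]
          push_cast
          nlinarith [Nat.cast_nonneg (α := ℝ) s']
        · have hn : 1 ≤ n := by omega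
          have hjineq : ∀ j : Fin (s'+1),
              (n:ℝ) * (∑ i, binNorm n (F i))
                - (n:ℝ) * (∑ i, if X ∈ F i then (1:ℝ) else 0)
                + (n:ℝ) * (if X ∈ F j then (1:ℝ) else 0)
              ≤ (n:ℝ) * ((n:ℝ) * (((s'+1 : ℕ) : ℝ) - 1)) := by
            intro j
            have hx : ∀ x ∈ X,
                (∑ i, binNorm (n-1) (delF (F i) x))
                  + (binNorm (n-1) (lnkF (F j) x) - binNorm (n-1) (delF (F j) x))
                ≤ (n:ℝ) * (((s'+1 : ℕ) : ℝ) - 1) := by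
              intro x hxX
              set G : Fin (s'+1) → Finset (Finset ℕ) :=
                fun i => if i = j then lnkF (F j) x else delF (F i) x with hG
              have hGsub : ∀ i, ∀ A ∈ G i, A ⊆ X.erase x := by
                intro i A hA
                by_cases hij : i = j
                · simp only [hG, hij, if_pos rfl] at hA
                  obtain ⟨B, hB, rfl⟩ := Finset.mem_image.mp hA
                  exact Finset.erase_subset_erase x (hsub j B (Finset.mem_filter.mp hB).1)
                · simp only [hG, if_neg hij] at hA
                  have h1 := Finset.mem_filter.mp hA
                  exact Finset.subset_erase.mpr ⟨hsub i A h1.1, h1.2⟩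
              have hGcross : CrossDep G := by
                rintro ⟨f, hf, hpw⟩
                have hxf : ∀ m, m ≠ j → x ∉ f m := by
                  intro m hm
                  have h1 := hf m
                  simp only [hG, if_neg hm] at h1
                  exact (Finset.mem_filter.mp h1).2
                refine hcross ⟨fun k => if k = j then insert x (f j) else f k, ?_, ?_⟩
                · intro k
                  simp only []
                  by_cases hk : k = j
                  · subst hk; rw [if_pos rfl]
                    have h1 := hf k
                    simp only [hG, if_pos rfl] at h1
                    obtain ⟨B, hB, hBe⟩ := Finset.mem_image.mp h1
                    have hB' := Finset.mem_filter.mp hB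
                    rw [← hBe, Finset.insert_erase hB'.2]
                    exact hB'.1
                  · rw [if_neg hk]
                    have h1 := hf k
                    simp only [hG, if_neg hk] at h1
                    exact (Finset.mem_filter.mp h1).1
                · intro k l hkl
                  simp only []
                  by_cases hk : k = j <;> by_cases hl : l = j
                  · exact absurd (hk.trans hl.symm) hkl
                  · subst hk
                    rw [if_pos rfl, if_neg hl]
                    exact Finset.disjoint_insert_left.mpr ⟨hxf l hl, hpw hkl⟩
                  · subst hl
                    rw [if_neg hk, if_pos rfl]
                    exact Finset.disjoint_insert_right.mpr ⟨hxf k hk, hpw hkl⟩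
                  · rw [if_neg hk, if_neg hl]; exact hpw hkl
              have hcard : (X.erase x).card = n - 1 := by
                rw [Finset.card_erase_of_mem hxX, hX]
              have hIHx := ih (n-1) (s'+1) (X.erase x) G (by omega) hs hcard hGsub hGcross
              have hsplit : ∑ i, binNorm (n-1) (G i)
                  = (∑ i, binNorm (n-1) (delF (F i) x))
                    + (binNorm (n-1) (lnkF (F j) x) - binNorm (n-1) (delF (F j) x)) := by
                have h1 : ∀ i : Fin (s'+1), binNorm (n-1) (G i)
                    = binNorm (n-1) (delF (F i) x)
                      + (if i = j then binNorm (n-1) (lnkF (F j) x)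
                          - binNorm (n-1) (delF (F j) x) else 0) := by
                  intro i
                  by_cases hij : i = j
                  · subst hij; simp [hG]
                  · simp [hG, hij]
                rw [Finset.sum_congr rfl (fun i _ => h1 i), Finset.sum_add_distrib,
                  Finset.sum_ite_eq' univ j
                    (fun _ => binNorm (n-1) (lnkF (F j) x) - binNorm (n-1) (delF (F j) x)),
                  if_pos (Finset.mem_univ j)]
              rw [hsplit] at hIHx
              have hc1 : ((n-1 : ℕ) : ℝ) + 1 = (n:ℝ) := by
                push_cast [Nat.cast_sub hn]
                ring
              calc (∑ i, binNorm (n-1) (delF (F i) x))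
                    + (binNorm (n-1) (lnkF (F j) x) - binNorm (n-1) (delF (F j) x))
                  ≤ (((n-1 : ℕ) : ℝ) + 1) * (((s'+1 : ℕ) : ℝ) - 1) := hIHx
                _ = (n:ℝ) * (((s'+1 : ℕ) : ℝ) - 1) := by rw [hc1]
            have hsum := Finset.sum_le_sum hx
            rw [Finset.sum_const, hX, nsmul_eq_mul] at hsum
            have hP : ∑ x ∈ X, (∑ i, binNorm (n-1) (delF (F i) x))
                = (n:ℝ) * (∑ i, binNorm n (F i))
                  - (n:ℝ) * (∑ i, if X ∈ F i then (1:ℝ) else 0) := by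
              rw [Finset.sum_comm]
              have h1 : ∀ i : Fin (s'+1), ∑ x ∈ X, binNorm (n-1) (delF (F i) x)
                  = (n:ℝ) * binNorm n (F i) - n * (if X ∈ F i then (1:ℝ) else 0) :=
                fun i => sum_binNorm_delF hn hX (hsub i)
              rw [Finset.sum_congr rfl (fun i _ => h1 i), Finset.sum_sub_distrib,
                ← Finset.mul_sum, ← Finset.mul_sum]
            have hQ : ∑ x ∈ X, binNorm (n-1) (lnkF (F j) x) = (n:ℝ) * binNorm n (F j) :=
              sum_binNorm_lnkF hn hX (hsub j) (hemp j)
            have hR : ∑ x ∈ X, binNorm (n-1) (delF (F j) x)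
                = (n:ℝ) * binNorm n (F j) - n * (if X ∈ F j then (1:ℝ) else 0) :=
              sum_binNorm_delF hn hX (hsub j)
            have hLHS : ∑ x ∈ X, ((∑ i, binNorm (n-1) (delF (F i) x))
                  + (binNorm (n-1) (lnkF (F j) x) - binNorm (n-1) (delF (F j) x)))
                = (n:ℝ) * (∑ i, binNorm n (F i))
                  - (n:ℝ) * (∑ i, if X ∈ F i then (1:ℝ) else 0)
                  + (n:ℝ) * (if X ∈ F j then (1:ℝ) else 0) := by
              rw [Finset.sum_add_distrib, Finset.sum_sub_distrib, hP, hQ, hR]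
              ring
            rw [hLHS] at hsum
            exact hsum
          have hEe : (∑ i, if X ∈ F i then (1:ℝ) else 0)
              - (if X ∈ F 0 then (1:ℝ) else 0) ≤ (s' : ℝ) := by
            have h1 : (if X ∈ F 0 then (1:ℝ) else 0)
                + ∑ i ∈ univ.erase (0 : Fin (s'+1)), (if X ∈ F i then (1:ℝ) else 0)
                = ∑ i, if X ∈ F i then (1:ℝ) else 0 :=
              Finset.add_sum_erase (univ : Finset (Fin (s'+1)))
                (fun i => if X ∈ F i then (1:ℝ) else 0) (mem_univ (0 : Fin (s'+1)))
            have h2 : ∑ i ∈ univ.erase (0 : Fin (s'+1)), (if X ∈ F i then (1:ℝ) else 0)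
                ≤ ((univ.erase (0 : Fin (s'+1))).card : ℕ) • (1:ℝ) := by
              apply Finset.sum_le_card_nsmul
              intro i _
              split_ifs <;> norm_num
            rw [Finset.card_erase_of_mem (mem_univ 0), Finset.card_univ,
              Fintype.card_fin, nsmul_eq_mul, mul_one] at h2
            have h3 : (((s' + 1 - 1 : ℕ)) : ℝ) = (s' : ℝ) := by norm_num
            rw [h3] at h2
            linarith [h1, h2]
          have h0 := hjineq 0
          have hnpos : (0:ℝ) < n := by exact_mod_cast hn
          have hc : ((s'+1 : ℕ) : ℝ) - 1 = (s' : ℝ) := by push_cast; ring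
          rw [hc] at h0
          have hfin : (n:ℝ) * (∑ i, binNorm n (F i)) ≤ (n:ℝ) * (((n:ℝ) + 1) * (s':ℝ)) := by
            nlinarith [h0, mul_le_mul_of_nonneg_left hEe hnpos.le]
          have hgoal : (∑ i, binNorm n (F i)) ≤ ((n:ℝ) + 1) * (s':ℝ) :=
            le_of_mul_le_mul_left hfin hnpos
          calc ∑ i, binNorm n (F i) ≤ ((n:ℝ) + 1) * (s':ℝ) := hgoal
            _ = ((n:ℝ) + 1) * (((s'+1 : ℕ) : ℝ) - 1) := by rw [hc]

end CrossDepProof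

theorem stmt_0 (n s : ℕ) (hs : 1 ≤ s) (F : Fin s → Finset (Finset ℕ))
    (hsub : ∀ i, ∀ A ∈ F i, A ⊆ Finset.range n)
    (hcross : CrossDep F) :
    ∑ i, binNorm n (F i) ≤ ((n : ℝ) + 1) * ((s : ℝ) - 1) :=
  CrossDepProof.main_aux (n + s) n s (Finset.range n) F le_rfl hs
    (Finset.card_range n) hsub hcross
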